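/- For fixed x ∈ ℝ², let V : ℝ² → ℝ be C¹ nonnegative such that t ↦ V(tx) - (1/2)⟨∇V(tx), tx⟩ is nondecreasing on (0,∞). Then for every t > 0, t² V(x) + ((1 - t²)/2)⟨∇V(x), x⟩ ≥ t² V(t⁻¹ x) ≥ 0. -/

import Mathlib

open scoped RealInnerProductSpace

theorem stmt_5 (V : EuclideanSpace ℝ (Fin 2) → ℝ) (x : EuclideanSpace ℝ (Fin 2))
    (hV : ContDiff ℝ 1 V) (hVnonneg : ∀ y, 0 ≤ V y)
    (hmono : MonotoneOn (fun t : ℝ => V (t • x) - (1 / 2) * ⟪gradient V (t • x), t • x⟫)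
        (Set.Ioi (0 : ℝ))) :
    ∀ t : ℝ, 0 < t →
      t ^ 2 * V x + ((1 - t ^ 2) / 2) * ⟪gradient V x, x⟫ ≥ t ^ 2 * V (t⁻¹ • x) ∧
      (0 : ℝ) ≤ t ^ 2 * V (t⁻¹ • x) := by
  have hgrad : ∀ (y z : EuclideanSpace ℝ (Fin 2)), ⟪gradient V y, z⟫ = fderiv ℝ V y z := by
    intro y z
    rw [gradient, InnerProductSpace.toDual_symm_apply]
  set g : ℝ → ℝ := fun t : ℝ => V (t • x) - (1 / 2) * ⟪gradient V (t • x), t • x⟫ with hg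
  set c : ℝ := ⟪gradient V x, x⟫ with hc
  set f : ℝ → ℝ := fun t => t ^ 2 * V x + ((1 - t ^ 2) / 2) * c - t ^ 2 * V (t⁻¹ • x) with hf
  -- derivative of f
  have hderiv : ∀ t : ℝ, 0 < t → HasDerivAt f (2 * t * (g 1 - g t⁻¹)) t := by
    intro t ht
    have hVdiff : DifferentiableAt ℝ V (t⁻¹ • x) := hV.differentiable one_ne_zero _
    have h1 : HasDerivAt (fun s : ℝ => s⁻¹ • x) (-(t⁻¹ * t⁻¹) • x) t := by
      have := (hasDerivAt_inv ht.ne').smul_const (F := EuclideanSpace ℝ (Fin 2)) x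
      simpa [neg_smul, mul_comm, pow_two, mul_inv] using this
    have h2 : HasDerivAt (fun s : ℝ => V (s⁻¹ • x))
        (fderiv ℝ V (t⁻¹ • x) (-(t⁻¹ * t⁻¹) • x)) t :=
      (hVdiff.hasFDerivAt.comp_hasDerivAt t h1)
    have h3 : HasDerivAt (fun s : ℝ => s ^ 2 * V (s⁻¹ • x))
        (2 * t * V (t⁻¹ • x) + t ^ 2 * fderiv ℝ V (t⁻¹ • x) (-(t⁻¹ * t⁻¹) • x)) t := by
      have := ((hasDerivAt_pow 2 t).mul h2)
      simpa [pow_one, Pi.mul_def] using this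
    have h4 : HasDerivAt f
        (2 * t * V x + (-(2 * t) / 2) * c -
          (2 * t * V (t⁻¹ • x) + t ^ 2 * fderiv ℝ V (t⁻¹ • x) (-(t⁻¹ * t⁻¹) • x))) t := by
      have ha : HasDerivAt (fun s : ℝ => s ^ 2 * V x) (2 * t * V x) t := by
        simpa [pow_one] using (hasDerivAt_pow 2 t).mul_const (V x)
      have hb : HasDerivAt (fun s : ℝ => ((1 - s ^ 2) / 2) * c) ((-(2 * t) / 2) * c) t := by
        have : HasDerivAt (fun s : ℝ => (1 - s ^ 2)) (-(2 * t)) t := by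
          simpa [pow_one, Pi.sub_def] using (hasDerivAt_const t (1 : ℝ)).sub (hasDerivAt_pow 2 t)
        simpa [div_mul_eq_mul_div] using (this.div_const 2).mul_const c
      exact (ha.add hb).sub h3
    convert h4 using 1
    have hlin : fderiv ℝ V (t⁻¹ • x) (-(t⁻¹ * t⁻¹) • x) =
        -(t⁻¹ * t⁻¹) * fderiv ℝ V (t⁻¹ • x) x := by
      rw [(fderiv ℝ V (t⁻¹ • x)).map_smul]; simp
    have hinner : ⟪gradient V (t⁻¹ • x), t⁻¹ • x⟫ = t⁻¹ * fderiv ℝ V (t⁻¹ • x) x := by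
      rw [real_inner_smul_right, hgrad]
    have hg1 : g 1 = V x - (1 / 2) * c := by
      simp [hg, hc]
    have hgt : g t⁻¹ = V (t⁻¹ • x) - (1 / 2) * (t⁻¹ * fderiv ℝ V (t⁻¹ • x) x) := by
      simp only [hg]; rw [hinner]
    rw [hg1, hgt, hlin]
    have ht' : t ≠ 0 := ht.ne'
    field_simp
    ring
  have hcont : ContinuousOn f {s : ℝ | s ≠ 0} := by
    apply ContinuousOn.sub
    · fun_prop
    · apply ContinuousOn.mul (by fun_prop)
      exact hV.continuous.comp_continuousOn ((continuousOn_inv₀).smul continuousOn_const)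
  have hf1 : f 1 = 0 := by simp [hf]
  intro t ht
  have ht' : t ≠ 0 := ht.ne'
  constructor
  · -- f t ≥ 0
    have key : 0 ≤ f t := by
      rcases le_or_gt 1 t with h1 | h1
      · -- monotone on Ici 1
        have hmonof : MonotoneOn f (Set.Ici (1 : ℝ)) := by
          apply monotoneOn_of_deriv_nonneg (convex_Ici 1)
          · exact hcont.mono (fun s hs => by
              simp only [Set.mem_setOf_eq]; exact ne_of_gt (lt_of_lt_of_le one_pos hs))
          · intro s hs
            rw [interior_Ici] at hs
            exact ((hderiv s (lt_trans one_pos hs)).differentiableAt).differentiableWithinAt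
          · intro s hs
            rw [interior_Ici] at hs
            have hs0 : (0:ℝ) < s := lt_trans one_pos hs
            rw [(hderiv s hs0).deriv]
            have : g s⁻¹ ≤ g 1 := hmono (Set.mem_Ioi.2 (inv_pos.2 hs0))
              (Set.mem_Ioi.2 one_pos) (by rw [inv_le_one₀ (lt_trans one_pos hs)]; exact hs.le)
            nlinarith
        have := hmonof (Set.mem_Ici.2 le_rfl) (Set.mem_Ici.2 h1) h1
        linarith [hf1 ▸ this]
      · -- antitone on Ioc 0 1
        have hantif : AntitoneOn f (Set.Ioc (0:ℝ) 1) := by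
          apply antitoneOn_of_deriv_nonpos (convex_Ioc 0 1)
          · exact hcont.mono (fun s hs => ne_of_gt hs.1)
          · intro s hs
            rw [interior_Ioc] at hs
            exact ((hderiv s hs.1).differentiableAt).differentiableWithinAt
          · intro s hs
            rw [interior_Ioc] at hs
            rw [(hderiv s hs.1).deriv]
            have : g 1 ≤ g s⁻¹ := hmono (Set.mem_Ioi.2 one_pos)
              (Set.mem_Ioi.2 (inv_pos.2 hs.1)) (by rw [one_le_inv₀ hs.1]; exact hs.2.le)
            nlinarith [hs.1]
        have := hantif (Set.mem_Ioc.2 ⟨ht, h1.le⟩) (Set.mem_Ioc.2 ⟨one_pos, le_rfl⟩) h1.le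
        linarith [hf1 ▸ this]
    simpa [hf, ge_iff_le, sub_nonneg] using key
  · exact mul_nonneg (sq_nonneg t) (hVnonneg _)
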